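/- Let Σ = {a,b}, let ∼ be the relation {(a,b),(b,a)} on Σ (which is neither reflexive nor transitive), and let G = {ab}. Then L((ab)*)_G ∩ L(a* b*) = { a^k b^k | k ≥ 0 }; consequently L((ab)*)_G is not regular, even though L((ab)*) is regular and G is finite. -/

import Mathlib

/-- The alphabet `Σ = {a, b}`. -/
inductive AB : Type
  | a : AB
  | b : AB
deriving DecidableEq

instance instFintypeAB : Fintype AB :=
  ⟨{AB.a, AB.b}, fun x => by cases x <;> simp⟩

/-- The adjustment relation `∼ = {(a,b), (b,a)}`, which is neither reflexive
nor transitive. -/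
def simAB (x y : AB) : Prop :=
  (x = AB.a ∧ y = AB.b) ∨ (x = AB.b ∧ y = AB.a)

/-- A guided rewrite step w.r.t. an adjustment relation `sim`. -/
def GuidedStep {α : Type} (sim : α → α → Prop) (G : Set (List α)) (u v : List α) : Prop :=
  ∃ g ∈ G, ∃ x y z : List α, u = x ++ y ++ z ∧ v = x ++ g ++ z ∧ List.Forall₂ sim y g

/-- The language of the regular expression `(ab)*`. -/
def Labstar : Language AB :=
  {w | ∃ k : ℕ, w = (List.replicate k [AB.a, AB.b]).flatten}

open AB List

abbrev Stp := GuidedStep simAB ({[AB.a, AB.b]} : Set (List AB))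

lemma step_iff {u v : List AB} :
    Stp u v ↔ ∃ x z, u = x ++ [b, a] ++ z ∧ v = x ++ [a, b] ++ z := by
  constructor
  · rintro ⟨g, hg, x, y, z, hu, hv, hf⟩
    rw [Set.mem_singleton_iff] at hg; subst hg
    simp only [List.forall₂_cons_right_iff, List.forall₂_nil_right_iff] at hf
    obtain ⟨y1, -, h1, ⟨y2, -, h2, rfl, rfl⟩, rfl⟩ := hf
    have hy1 : y1 = b := by rcases h1 with ⟨_, h⟩ | ⟨h, _⟩ <;> simp_all [simAB]
    have hy2 : y2 = a := by rcases h2 with ⟨h, _⟩ | ⟨_, h⟩ <;> simp_all [simAB]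
    subst hy1; subst hy2
    exact ⟨x, z, hu, hv⟩
  · rintro ⟨x, z, hu, hv⟩
    exact ⟨[a, b], rfl, x, [b, a], z, hu, hv,
      .cons (Or.inr ⟨rfl, rfl⟩) (.cons (Or.inl ⟨rfl, rfl⟩) .nil)⟩

lemma step_count {u v : List AB} (h : Stp u v) (c : AB) : u.count c = v.count c := by
  rw [step_iff] at h
  obtain ⟨x, z, rfl, rfl⟩ := h
  simp [List.count_append, List.count_cons]
  omega

lemma rtg_count {u v : List AB} (h : Relation.ReflTransGen Stp u v) (c : AB) :
    u.count c = v.count c := by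
  induction h with
  | refl => rfl
  | tail _ h ih => exact ih.trans (step_count h c)

lemma rtg_append_right {u v w : List AB} (h : Relation.ReflTransGen Stp u v) :
    Relation.ReflTransGen Stp (u ++ w) (v ++ w) := by
  induction h with
  | refl => exact .refl
  | tail _ h ih =>
    refine ih.tail ?_
    rw [step_iff] at h ⊢
    obtain ⟨x, z, rfl, rfl⟩ := h
    exact ⟨x, z ++ w, by simp, by simp⟩

lemma bubble (j : ℕ) (x z : List AB) :
    Relation.ReflTransGen Stp (x ++ replicate j b ++ [a] ++ z)
      (x ++ [a] ++ replicate j b ++ z) := by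
  induction j generalizing z with
  | zero => simp; exact .refl
  | succ j ih =>
    have s1 : Stp (x ++ replicate (j+1) b ++ [a] ++ z)
        (x ++ replicate j b ++ [a] ++ (b :: z)) := by
      rw [step_iff]
      exact ⟨x ++ replicate j b, z, by simp [replicate_succ'], by simp⟩
    exact Relation.ReflTransGen.head s1 (by simpa [replicate_succ'] using ih (b :: z))

abbrev Rk (k : ℕ) : List AB := (List.replicate k [a, b]).flatten

lemma Rk_succ (k : ℕ) : Rk (k + 1) = Rk k ++ [a, b] := by
  show (List.replicate (k+1) [a,b]).flatten = _
  rw [List.replicate_succ']; simp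

lemma reach (k : ℕ) :
    Relation.ReflTransGen Stp (Rk k) (replicate k a ++ replicate k b) := by
  induction k with
  | zero => exact .refl
  | succ k ih =>
    have h1 : Relation.ReflTransGen Stp (Rk (k+1))
        ((replicate k a ++ replicate k b) ++ [a, b]) := by
      rw [Rk_succ]
      exact rtg_append_right ih
    refine h1.trans ?_
    have := bubble k (replicate k a) [b]
    have e1 : replicate k a ++ replicate k b ++ [a, b] =
        replicate k a ++ replicate k b ++ [a] ++ [b] := by simp
    have e2 : replicate k a ++ [a] ++ replicate k b ++ [b] =
        replicate (k+1) a ++ replicate (k+1) b := by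
      simp [replicate_succ']
    rw [e1, ← e2]
    exact this

lemma count_Rk (k : ℕ) (c : AB) : (Rk k).count c = k := by
  induction k with
  | zero => rfl
  | succ k ih =>
    have : Rk (k+1) = a :: b :: Rk k := rfl
    rw [this]
    cases c <;> simp_all [List.count_cons]

/-- Every word in the closure has equal numbers of a's and b's. -/
lemma mem_LG_count {v : List AB}
    (h : v ∈ {v : List AB | ∃ u ∈ Labstar, Relation.ReflTransGen Stp u v}) :
    v.count a = v.count b := by
  obtain ⟨u, ⟨k, rfl⟩, hr⟩ := h
  have ha := rtg_count hr a
  have hb := rtg_count hr b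
  rw [← ha, ← hb]
  rw [show (List.replicate k [a,b]).flatten = Rk k from rfl, count_Rk, count_Rk]

lemma mem_LG_akbk (k : ℕ) :
    (replicate k a ++ replicate k b) ∈
      {v : List AB | ∃ u ∈ Labstar, Relation.ReflTransGen Stp u v} :=
  ⟨Rk k, ⟨k, rfl⟩, reach k⟩

/-- DFA for `(ab)*`. -/
inductive St : Type
  | s0 | s1 | dead
deriving DecidableEq

instance : Fintype St :=
  ⟨{St.s0, St.s1, St.dead}, fun x => by cases x <;> simp⟩

def Mab : DFA AB St where
  step s c := match s, c with
    | .s0, .a => .s1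
    | .s1, .b => .s0
    | _, _ => .dead
  start := .s0
  accept := {.s0}

lemma step0 : ∀ s c, Mab.step s c = St.s0 → s = St.s1 ∧ c = AB.b := by decide
lemma step1 : ∀ s c, Mab.step s c = St.s1 → s = St.s0 ∧ c = AB.a := by decide

lemma eval_Rk (k : ℕ) : Mab.eval (Rk k) = St.s0 := by
  induction k with
  | zero => rfl
  | succ k ih =>
    have : Rk (k+1) = [a, b] ++ Rk k := rfl
    rw [DFA.eval, this, DFA.evalFrom_of_append]
    exact ih

lemma eval_fwd (w : List AB) :
    (Mab.eval w = St.s0 → w ∈ Labstar) ∧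
    (Mab.eval w = St.s1 → ∃ k, w = Rk k ++ [a]) := by
  induction w using List.reverseRecOn with
  | nil => exact ⟨fun _ => ⟨0, rfl⟩, fun h => by simp [DFA.eval, DFA.evalFrom, Mab] at h⟩
  | append_singleton w c ih =>
    have hev : Mab.eval (w ++ [c]) = Mab.step (Mab.eval w) c := by
      rw [DFA.eval, DFA.evalFrom_of_append]; rfl
    constructor
    · intro h
      rw [hev] at h
      obtain ⟨hs, rfl⟩ := step0 _ _ h
      obtain ⟨k, rfl⟩ := ih.2 hs
      refine ⟨k + 1, ?_⟩
      show _ = Rk (k + 1)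
      rw [Rk_succ]; simp
    · intro h
      rw [hev] at h
      obtain ⟨hs, rfl⟩ := step1 _ _ h
      obtain ⟨k, rfl⟩ := ih.1 hs
      exact ⟨k, rfl⟩

lemma accepts_Mab : Mab.accepts = Labstar := by
  ext w
  constructor
  · intro h
    exact (eval_fwd w).1 h
  · rintro ⟨k, rfl⟩
    show Mab.eval _ ∈ Mab.accept
    exact eval_Rk k


/-- With the non-equivalence adjustment relation
`∼ = {(a,b),(b,a)}` and the single guide `ab`, one has
`L((ab)*)_G ∩ L(a* b*) = { a^k b^k | k ≥ 0 }`; consequently `L((ab)*)_G` is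
not regular, even though `L((ab)*)` is regular and `G` is finite. -/
theorem non_equivalence_adjustment_not_regular :
    ({v : List AB | ∃ u ∈ Labstar,
        Relation.ReflTransGen (GuidedStep simAB {[AB.a, AB.b]}) u v} ∩
        {w : List AB | ∃ m n : ℕ,
          w = List.replicate m AB.a ++ List.replicate n AB.b} =
      {w : List AB | ∃ k : ℕ,
          w = List.replicate k AB.a ++ List.replicate k AB.b}) ∧
    ¬ Language.IsRegular
        {v : List AB | ∃ u ∈ Labstar,
          Relation.ReflTransGen (GuidedStep simAB {[AB.a, AB.b]}) u v} ∧
    Language.IsRegular Labstar ∧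
    Set.Finite ({[AB.a, AB.b]} : Set (List AB)) := by
  refine ⟨?_, ?_, ⟨St, inferInstance, Mab, accepts_Mab⟩, Set.finite_singleton _⟩
  · ext w
    constructor
    · rintro ⟨hLG, m, n, rfl⟩
      have hc := mem_LG_count hLG
      simp [List.count_append, List.count_replicate] at hc
      exact ⟨m, by rw [hc]⟩
    · rintro ⟨k, rfl⟩
      exact ⟨mem_LG_akbk k, k, k, rfl⟩
  · rintro ⟨σ, fσ, M, hM⟩
    set n := Fintype.card σ with hn
    have hx : (replicate n a ++ replicate n b) ∈ M.accepts := by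
      rw [hM]; exact mem_LG_akbk n
    have hlen : n ≤ (replicate n a ++ replicate n b).length := by simp
    obtain ⟨p, q, r, hxe, hpl, hq, hsub⟩ := M.pumping_lemma hx hlen
    have hpq : p ++ q = replicate (p.length + q.length) a := by
      have h1 : (p ++ q ++ r).take (p.length + q.length) = p ++ q := by
        rw [← List.length_append (as := p) (bs := q)]; exact List.take_left
      rw [← hxe, List.take_append_of_le_length (by simpa using hpl), List.take_replicate,
        min_eq_left hpl] at h1
      exact h1.symm
    have hqa : ∀ c ∈ q, c = a := fun c hc =>
      List.eq_of_mem_replicate (hpq ▸ List.mem_append_right p hc)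
    have hqca : q.count a = q.length := List.count_eq_length.2 fun c hc => (hqa c hc).symm
    have hqcb : q.count b = 0 := List.count_eq_zero.2 fun hc => by
      have := hqa b hc; simp at this
    have hy : (p ++ (q ++ q) ++ r) ∈ M.accepts := by
      apply hsub
      show (p ++ (q ++ q) ++ r) ∈ ({p} * KStar.kstar {q} * {r} : Language AB)
      rw [Language.mem_mul]
      refine ⟨p ++ (q ++ q), ?_, r, rfl, by simp⟩
      rw [Language.mem_mul]
      refine ⟨p, rfl, q ++ q, ?_, rfl⟩
      rw [Language.mem_kstar]
      exact ⟨[q, q], by simp, by intro y hy; simp at hy; subst hy; rfl⟩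
    rw [hM] at hy
    have hcy := mem_LG_count hy
    have hcx : (p ++ q ++ r).count a = n ∧ (p ++ q ++ r).count b = n := by
      rw [← hxe]
      constructor <;> simp [List.count_append, List.count_replicate]
    have hql : q.length ≠ 0 := fun h0 => hq (List.eq_nil_of_length_eq_zero h0)
    simp only [List.count_append] at hcy hcx
    omega
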